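/- With the notation of the cable-direction error dynamics (q, q_d unit vectors, ωᵀq = 0, ω_dᵀq_d = 0, e_q = q_d × q, e_ω = ω + (q̂)²ω_d, and ė_q = (qᵀq_d)e_ω + ((2I − qqᵀ)ω_d) × e_q + e_ω × e_q − (qᵀω_d)(qᵀq_d)q), the inner product satisfies ė_qᵀe_ω ≤ ‖e_ω‖² + C_ω‖e_q‖‖e_ω‖, where C_ω := ‖(2I − qqᵀ)ω_d‖. -/

import Mathlib

open scoped RealInnerProductSpace

/-- Cross product on `ℝ³` viewed as a Euclidean space. -/
def cross3 (a b : EuclideanSpace ℝ (Fin 3)) : EuclideanSpace ℝ (Fin 3) :=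
  WithLp.toLp 2 (crossProduct a b)

lemma inner_expand (a b : EuclideanSpace ℝ (Fin 3)) :
    ⟪a, b⟫ = a 0 * b 0 + a 1 * b 1 + a 2 * b 2 := by
  simp [PiLp.inner_apply, Fin.sum_univ_three, mul_comm]

lemma cross3_apply (a b : EuclideanSpace ℝ (Fin 3)) :
    cross3 a b 0 = a 1 * b 2 - a 2 * b 1 ∧
    cross3 a b 1 = a 2 * b 0 - a 0 * b 2 ∧
    cross3 a b 2 = a 0 * b 1 - a 1 * b 0 := by
  simp [cross3, crossProduct]

lemma inner_cross_left (a b : EuclideanSpace ℝ (Fin 3)) :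
    ⟪cross3 a b, a⟫ = 0 := by
  obtain ⟨h0, h1, h2⟩ := cross3_apply a b
  rw [inner_expand, h0, h1, h2]; ring

lemma norm_cross3_le (a b : EuclideanSpace ℝ (Fin 3)) :
    ‖cross3 a b‖ ≤ ‖a‖ * ‖b‖ := by
  have h : ‖cross3 a b‖ ^ 2 ≤ (‖a‖ * ‖b‖) ^ 2 := by
    rw [← real_inner_self_eq_norm_sq]
    have ha := real_inner_self_eq_norm_sq a
    have hb := real_inner_self_eq_norm_sq b
    obtain ⟨h0, h1, h2⟩ := cross3_apply a b
    rw [inner_expand, h0, h1, h2]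
    rw [inner_expand] at ha hb
    rw [mul_pow, ← ha, ← hb]
    nlinarith [sq_nonneg (a 0 * b 1 - a 1 * b 0), sq_nonneg (a 1 * b 2 - a 2 * b 1), sq_nonneg (a 2 * b 0 - a 0 * b 2), sq_nonneg (a 0 * b 0 + a 1 * b 1 + a 2 * b 2)]
  nlinarith [norm_nonneg (cross3 a b), mul_nonneg (norm_nonneg a) (norm_nonneg b)]

theorem direction_error_derivative_inner_bound
    (q qd ω ωd : EuclideanSpace ℝ (Fin 3))
    (hq : ‖q‖ = 1) (hqd : ‖qd‖ = 1)
    (hωq : ⟪ω, q⟫ = 0) (hωdqd : ⟪ωd, qd⟫ = 0)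
    (e_q e_ω de_q : EuclideanSpace ℝ (Fin 3))
    (he_q : e_q = cross3 qd q)
    (he_ω : e_ω = ω + (⟪q, ωd⟫ • q - ωd))
    (hde_q : de_q = ⟪q, qd⟫ • e_ω +
      cross3 ((2 : ℝ) • ωd - ⟪q, ωd⟫ • q) e_q + cross3 e_ω e_q -
      (⟪q, ωd⟫ * ⟪q, qd⟫) • q) :
    ⟪de_q, e_ω⟫ ≤ ‖e_ω‖ ^ 2 + ‖(2 : ℝ) • ωd - ⟪q, ωd⟫ • q‖ * ‖e_q‖ * ‖e_ω‖ := by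
  set v := (2 : ℝ) • ωd - ⟪q, ωd⟫ • q with hv
  have hqe : ⟪q, e_ω⟫ = 0 := by
    rw [he_ω, inner_add_right, inner_sub_right, real_inner_smul_right,
      real_inner_self_eq_norm_sq, hq, real_inner_comm ω q]
    rw [hωq]; ring
  have h1 : ⟪de_q, e_ω⟫ = ⟪q, qd⟫ * ‖e_ω‖ ^ 2 + ⟪cross3 v e_q, e_ω⟫ := by
    rw [hde_q]
    rw [inner_sub_left, inner_add_left, inner_add_left, real_inner_smul_left,
      real_inner_smul_left, inner_cross_left e_ω e_q, real_inner_self_eq_norm_sq]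
    rw [hqe]; ring
  have h2 : ⟪q, qd⟫ ≤ 1 := by
    calc ⟪q, qd⟫ ≤ ‖q‖ * ‖qd‖ := real_inner_le_norm q qd
    _ = 1 := by rw [hq, hqd]; ring
  have h3 : ⟪cross3 v e_q, e_ω⟫ ≤ ‖v‖ * ‖e_q‖ * ‖e_ω‖ := by
    calc ⟪cross3 v e_q, e_ω⟫ ≤ ‖cross3 v e_q‖ * ‖e_ω‖ := real_inner_le_norm _ _
    _ ≤ ‖v‖ * ‖e_q‖ * ‖e_ω‖ := by
        have := norm_cross3_le v e_q
        have := norm_nonneg e_ω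
        nlinarith
  rw [h1]
  nlinarith [sq_nonneg ‖e_ω‖]
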